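/- Let S be the swap operator on ℂ² ⊗ ℂ², i.e., the complex matrix indexed by (Fin 2 × Fin 2) with S (i,j) (k,l) = 1 if i = l and j = k, and 0 otherwise. For every real ξ with 0 < ξ < 1, there exist positive semidefinite complex matrices X and Y indexed by (Fin 2 × Fin 2) such that X·Y + Y·X = ξ • 1 + S, i.e., S = X·Y + Y·X − ξ • 1. -/

import Mathlib

open Matrix ComplexOrder

private lemma swap_aux_cholesky (α r s t u v w z : ℝ)
    (h1 : u * u = α) (h2 : v * v = r) (h3 : v * w = s) (h4 : w * w + z * z = t) :
    (!![u,0,0,0; 0,v,w,0; 0,0,z,0; 0,0,0,u] : Matrix (Fin 4) (Fin 4) ℝ).transpose *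
      !![u,0,0,0; 0,v,w,0; 0,0,z,0; 0,0,0,u]
    = !![α,0,0,0; 0,r,s,0; 0,s,t,0; 0,0,0,α] := by
  have hCt : (!![u,0,0,0; 0,v,w,0; 0,0,z,0; 0,0,0,u] : Matrix (Fin 4) (Fin 4) ℝ).transpose
      = !![u,0,0,0; 0,v,0,0; 0,w,z,0; 0,0,0,u] := by
    ext i j
    fin_cases i <;> fin_cases j <;> rfl
  rw [hCt]
  ext i j
  fin_cases i <;> fin_cases j <;>
    simp [Matrix.mul_apply, Fin.sum_univ_four, Matrix.vecHead, Matrix.vecTail] <;> linarith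

set_option maxHeartbeats 1000000 in
private lemma swap_aux_anticomm (k a r t s ξ' : ℂ)
    (h1 : a + a = ξ' + 1) (h2 : r + r = ξ') (h3 : k * t + t * k = ξ')
    (h4 : s + s * k = 1) :
    (!![1,0,0,0; 0,1,0,0; 0,0,k,0; 0,0,0,1] : Matrix (Fin 4) (Fin 4) ℂ) *
        !![a,0,0,0; 0,r,s,0; 0,s,t,0; 0,0,0,a] +
      !![a,0,0,0; 0,r,s,0; 0,s,t,0; 0,0,0,a] * !![1,0,0,0; 0,1,0,0; 0,0,k,0; 0,0,0,1]
    = ξ' • (1 : Matrix (Fin 4) (Fin 4) ℂ) + !![1,0,0,0; 0,0,1,0; 0,1,0,0; 0,0,0,1] := by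
  ext i j
  fin_cases i <;> fin_cases j <;>
    simp [Matrix.mul_apply, Fin.sum_univ_four, Matrix.one_apply,
      Matrix.vecHead, Matrix.vecTail] <;>
    first
      | linear_combination h1
      | linear_combination h2
      | linear_combination h3
      | linear_combination h4

/-- For every `0 < ξ < 1`, the shifted swap operator `ξ•1 + S` on two qubits
can be written as the anticommutator of two positive semidefinite matrices,
i.e. `S = X·Y + Y·X − ξ•1`. -/
theorem shifted_swap_is_anticommutator
    (S : Matrix (Fin 2 × Fin 2) (Fin 2 × Fin 2) ℂ)
    (hS : ∀ p q : Fin 2 × Fin 2,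
      S p q = if p.1 = q.2 ∧ p.2 = q.1 then 1 else 0)
    (ξ : ℝ) (hξ0 : 0 < ξ) (hξ1 : ξ < 1) :
    ∃ X Y : Matrix (Fin 2 × Fin 2) (Fin 2 × Fin 2) ℂ,
      X.PosSemidef ∧ Y.PosSemidef ∧
      X * Y + Y * X = (ξ : ℂ) • (1 : Matrix (Fin 2 × Fin 2) (Fin 2 × Fin 2) ℂ) + S := by
  classical
  set e : Fin 2 × Fin 2 ≃ Fin 4 := finProdFinEquiv with he
  -- real parameters
  set s : ℝ := 8 / (8 + ξ ^ 2) with hs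
  have h8 : (0:ℝ) < 8 + ξ ^ 2 := by positivity
  have hs0 : 0 < s := by positivity
  have hs1 : s ≤ 1 := by
    rw [hs, div_le_one h8]; nlinarith
  have hr : (0:ℝ) < ξ / 2 := by linarith
  have hα : (0:ℝ) ≤ (1 + ξ) / 2 := by linarith
  have hss : s ^ 2 ≤ 1 := by nlinarith
  have hi2 : Real.sqrt (2 / ξ) * Real.sqrt (2 / ξ) = 2 / ξ :=
    Real.mul_self_sqrt (by positivity)
  have hrem : (0:ℝ) ≤ 4 / ξ - (s * Real.sqrt (2 / ξ)) * (s * Real.sqrt (2 / ξ)) := by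
    have h1 : (s * Real.sqrt (2 / ξ)) * (s * Real.sqrt (2 / ξ)) = s ^ 2 * (2 / ξ) := by
      rw [show (s * Real.sqrt (2 / ξ)) * (s * Real.sqrt (2 / ξ))
          = (s * s) * (Real.sqrt (2 / ξ) * Real.sqrt (2 / ξ)) by ring, hi2]; ring
    rw [h1]
    have h2 : s ^ 2 * (2 / ξ) ≤ 1 * (2 / ξ) :=
      mul_le_mul_of_nonneg_right hss (by positivity)
    have h3 : (2:ℝ) / ξ ≤ 4 / ξ := by gcongr <;> norm_num
    linarith
  -- Cholesky data
  set u : ℝ := Real.sqrt ((1 + ξ) / 2) with hu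
  set v : ℝ := Real.sqrt (ξ / 2) with hv
  set w : ℝ := s * Real.sqrt (2 / ξ) with hw
  set z : ℝ := Real.sqrt (4 / ξ - w * w) with hz
  have eu : u * u = (1 + ξ) / 2 := Real.mul_self_sqrt hα
  have ev : v * v = ξ / 2 := Real.mul_self_sqrt hr.le
  have evw : v * w = s := by
    rw [hv, hw, show Real.sqrt (ξ / 2) * (s * Real.sqrt (2 / ξ))
        = s * (Real.sqrt (ξ / 2) * Real.sqrt (2 / ξ)) by ring,
      ← Real.sqrt_mul hr.le, show ξ / 2 * (2 / ξ) = 1 by field_simp, Real.sqrt_one, mul_one]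
  have ez : w * w + z * z = 4 / ξ := by
    rw [hz, Real.mul_self_sqrt hrem]; ring
  -- the real Cholesky factorization
  set Y4r : Matrix (Fin 4) (Fin 4) ℝ :=
    !![(1 + ξ) / 2, 0, 0, 0; 0, ξ / 2, s, 0; 0, s, 4 / ξ, 0; 0, 0, 0, (1 + ξ) / 2] with hY4r
  have hC : (!![u,0,0,0; 0,v,w,0; 0,0,z,0; 0,0,0,u] :
      Matrix (Fin 4) (Fin 4) ℝ).transpose * !![u,0,0,0; 0,v,w,0; 0,0,z,0; 0,0,0,u] = Y4r :=
    swap_aux_cholesky _ _ _ _ _ _ _ _ eu ev evw ez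
  -- complex matrices
  set k : ℂ := ((ξ ^ 2 / 8 : ℝ) : ℂ) with hk
  set X4 : Matrix (Fin 4) (Fin 4) ℂ := Matrix.diagonal ![1,1,k,1] with hX4
  set Y4 : Matrix (Fin 4) (Fin 4) ℂ :=
    !![(((1 + ξ) / 2 : ℝ) : ℂ), 0, 0, 0; 0, ((ξ / 2 : ℝ) : ℂ), ((s : ℝ) : ℂ), 0;
       0, ((s : ℝ) : ℂ), ((4 / ξ : ℝ) : ℂ), 0; 0, 0, 0, (((1 + ξ) / 2 : ℝ) : ℂ)] with hY4
  have hY4map : Y4 = Y4r.map (fun x => (x : ℂ)) := by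
    ext i j
    fin_cases i <;> fin_cases j <;> simp [hY4, hY4r, Matrix.map_apply, Matrix.vecHead, Matrix.vecTail]
  have hY4psd : Y4.PosSemidef := by
    set C : Matrix (Fin 4) (Fin 4) ℂ :=
      (!![u,0,0,0; 0,v,w,0; 0,0,z,0; 0,0,0,u] : Matrix (Fin 4) (Fin 4) ℝ).map
        (fun x => (x : ℂ)) with hCdef
    have h2 : Cᴴ = ((!![u,0,0,0; 0,v,w,0; 0,0,z,0; 0,0,0,u] :
        Matrix (Fin 4) (Fin 4) ℝ).transpose).map (fun x => (x : ℂ)) := by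
      ext i j
      fin_cases i <;> fin_cases j <;>
        simp [hCdef, Matrix.conjTranspose_apply, Matrix.map_apply, Matrix.transpose_apply,
          Matrix.vecHead, Matrix.vecTail]
    have h1 : Y4 = Cᴴ * C := by
      rw [h2, hCdef, hY4map, ← hC]
      ext i j
      simp [Matrix.map_apply, Matrix.mul_apply, Fin.sum_univ_four]
    rw [h1]
    exact Matrix.posSemidef_conjTranspose_mul_self _
  have hX4psd : X4.PosSemidef := by
    rw [hX4]
    refine Matrix.posSemidef_diagonal_iff.mpr fun i => ?_
    fin_cases i <;> simp [hk, Matrix.vecHead, Matrix.vecTail] <;>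
      exact (by rw [show (ξ : ℂ) ^ 2 / 8 = ((ξ ^ 2 / 8 : ℝ) : ℂ) by push_cast; ring]
                exact_mod_cast (by positivity : (0:ℝ) ≤ ξ ^ 2 / 8))
  -- the swap matrix over Fin 4
  set S4 : Matrix (Fin 4) (Fin 4) ℂ := !![1,0,0,0; 0,0,1,0; 0,1,0,0; 0,0,0,1] with hS4
  have hSsub : S = S4.submatrix e e := by
    ext p q
    rw [hS]
    fin_cases p <;> fin_cases q <;>
      simp [hS4, he, finProdFinEquiv, Matrix.submatrix_apply, Fin.ext_iff,
        Matrix.vecHead, Matrix.vecTail]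
  have hξC : (ξ : ℂ) ≠ 0 := by exact_mod_cast hξ0.ne'
  have h8C : ((8 + ξ ^ 2 : ℝ) : ℂ) ≠ 0 := by exact_mod_cast h8.ne'
  have hX4lit : X4 = !![1,0,0,0; 0,1,0,0; 0,0,k,0; 0,0,0,1] := by
    rw [hX4]
    ext i j
    fin_cases i <;> fin_cases j <;>
      simp [Matrix.diagonal, Matrix.vecHead, Matrix.vecTail]
  have hmain : X4 * Y4 + Y4 * X4 = (ξ : ℂ) • (1 : Matrix (Fin 4) (Fin 4) ℂ) + S4 := by
    rw [hX4lit, hY4, hS4]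
    apply swap_aux_anticomm
    · push_cast; ring
    · push_cast; ring
    · rw [hk]; push_cast; field_simp; ring
    · rw [hk, hs]; push_cast; field_simp
  refine ⟨X4.submatrix e e, Y4.submatrix e e, hX4psd.submatrix e, hY4psd.submatrix e, ?_⟩
  have h1 : (X4.submatrix e e) * (Y4.submatrix e e) + (Y4.submatrix e e) * (X4.submatrix e e)
      = (X4 * Y4 + Y4 * X4).submatrix e e := by
    rw [Matrix.submatrix_mul_equiv, Matrix.submatrix_mul_equiv]; rfl
  rw [h1, hmain, hSsub]
  have h2 : (((ξ:ℂ) • (1 : Matrix (Fin 4) (Fin 4) ℂ) + S4).submatrix ⇑e ⇑e)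
      = (ξ:ℂ) • ((1 : Matrix (Fin 4) (Fin 4) ℂ).submatrix ⇑e ⇑e) + S4.submatrix ⇑e ⇑e := rfl
  rw [h2, Matrix.submatrix_one_equiv]
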